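/- Let V_i, V_j, V_k be finite sets of sizes r_i, r_j, r_k, and let F_ij, F_ik, F_jk be uniformly random subsets of V_i×V_j, V_i×V_k, V_j×V_k of sizes f_ij, f_ik, f_jk, chosen independently. Fix u, u' ∈ V_i with u ≠ u', and v, v' ∈ V_j. Let Γ and Γ' be the triple sets induced by (F_ij, F_ik, F_jk) and by ((F_ij \ {(u,v)}) ∪ {(u',v')}, F_ik, F_jk) respectively, where Γ(F) = {(a,b,c) : (a,b) ∈ F, (a,c) ∈ F_ik, (b,c) ∈ F_jk}. Then Pr[ |Γ Δ Γ'| ≥ 22·f_ik·f_jk/(r_i·r_j·r_k) ] ≤ 2·( 2^(−11·f_ik·f_jk/(r_i·r_j·r_k)) + exp(−f_ik/(3·r_i)) ). -/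

import Mathlib

open Finset
open scoped symmDiff Classical

/-- The triple set induced by `(F_ij, F_ik, F_jk)` inside `V_i × V_j × V_k`. -/
def tripleSet {α β γ : Type*} [DecidableEq α] [DecidableEq β] [DecidableEq γ]
    (Vi : Finset α) (Vj : Finset β) (Vk : Finset γ)
    (Fij : Finset (α × β)) (Fik : Finset (α × γ)) (Fjk : Finset (β × γ)) :
    Finset (α × β × γ) :=
  (Vi ×ˢ Vj ×ˢ Vk).filter (fun x =>
    (x.1, x.2.1) ∈ Fij ∧ (x.1, x.2.2) ∈ Fik ∧ (x.2.1, x.2.2) ∈ Fjk)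


-- factorial lower bound: (2/11)^n n^n ≤ n!
lemma aux_fact_lb (n : ℕ) : ((2:ℝ)/11) ^ n * (n:ℝ) ^ n ≤ (n.factorial : ℝ) := by
  induction n with
  | zero => simp
  | succ n ih =>
    have key : ((n:ℝ)+1) ^ n ≤ (11/2) * (n:ℝ) ^ n := by
      rcases Nat.eq_zero_or_pos n with h | h
      · subst h; norm_num
      · have hn : (0:ℝ) < n := by exact_mod_cast h
        have h1 : ((n:ℝ)+1) = n * (1 + 1/n) := by field_simp
        have h2 : (1 + 1/(n:ℝ)) ≤ Real.exp (1/n) := by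
          have := Real.add_one_le_exp (1/(n:ℝ)); linarith
        have h3 : ((1:ℝ) + 1/n) ^ n ≤ Real.exp (1/n) ^ n := by
          apply pow_le_pow_left₀ (by positivity) h2
        have h4 : Real.exp (1/(n:ℝ)) ^ n = Real.exp 1 := by
          rw [← Real.exp_nat_mul]
          congr 1
          field_simp
        have h5 : Real.exp 1 ≤ 11/2 := by
          have := Real.exp_one_lt_d9; linarith
        calc ((n:ℝ)+1) ^ n = (n:ℝ) ^ n * (1 + 1/n) ^ n := by rw [h1, mul_pow]
          _ ≤ (n:ℝ) ^ n * (11/2) := by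
              apply mul_le_mul_of_nonneg_left _ (by positivity)
              rw [h4] at h3; linarith
          _ = (11/2) * (n:ℝ) ^ n := by ring
    have hfac : ((n+1).factorial : ℝ) = ((n:ℝ)+1) * n.factorial := by
      push_cast [Nat.factorial_succ]; ring
    calc ((2:ℝ)/11) ^ (n+1) * ((n+1:ℕ):ℝ) ^ (n+1)
        = ((n:ℝ)+1) * ((2/11) * (((n:ℝ)+1) ^ n * (2/11) ^ n)) := by push_cast; ring
      _ ≤ ((n:ℝ)+1) * ((2/11) * (((11/2) * (n:ℝ) ^ n) * (2/11) ^ n)) := by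
          apply mul_le_mul_of_nonneg_left _ (by positivity)
          apply mul_le_mul_of_nonneg_left _ (by positivity)
          apply mul_le_mul_of_nonneg_right key (by positivity)
      _ = ((n:ℝ)+1) * ((2/11) ^ n * (n:ℝ) ^ n) := by ring
      _ ≤ ((n:ℝ)+1) * n.factorial := by
          apply mul_le_mul_of_nonneg_left ih (by positivity)
      _ = ((n+1).factorial : ℝ) := hfac.symm


lemma aux_descF (t : ℕ) : ∀ {m N : ℕ}, m ≤ N →
    m.descFactorial t * N ^ t ≤ m ^ t * N.descFactorial t := by
  induction t with
  | zero => intro m N _; simp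
  | succ t ih =>
    intro m N h
    rw [Nat.descFactorial_succ, Nat.descFactorial_succ, pow_succ, pow_succ]
    have h1 : (m - t) * N ≤ m * (N - t) := by
      rcases le_or_gt t m with ht | ht
      · have hmt : m * t ≤ t * N := by
          rw [Nat.mul_comm m t]; exact Nat.mul_le_mul_left t h
        rw [Nat.sub_mul, Nat.mul_sub]
        omega
      · simp [Nat.sub_eq_zero_of_le ht.le]
    calc (m - t) * m.descFactorial t * (N ^ t * N)
        = ((m - t) * N) * (m.descFactorial t * N ^ t) := by ring
      _ ≤ (m * (N - t)) * (m ^ t * N.descFactorial t) := Nat.mul_le_mul h1 (ih h)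
      _ = m ^ t * m * ((N - t) * N.descFactorial t) := by ring

lemma aux_choose_ratio {t m N : ℕ} (htm : t ≤ m) (hmN : m ≤ N) :
    (N - t).choose (m - t) * N ^ t ≤ m ^ t * N.choose m := by
  have hid : N.choose m * m.choose t = N.choose t * (N - t).choose (m - t) :=
    Nat.choose_mul htm
  have h1 : (N - t).choose (m - t) * N.descFactorial t = N.choose m * m.descFactorial t := by
    rw [Nat.descFactorial_eq_factorial_mul_choose, Nat.descFactorial_eq_factorial_mul_choose]
    calc (N - t).choose (m - t) * (t.factorial * N.choose t)
        = t.factorial * (N.choose t * (N - t).choose (m - t)) := by ring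
      _ = t.factorial * (N.choose m * m.choose t) := by rw [hid]
      _ = N.choose m * (t.factorial * m.choose t) := by ring
  have hpos : 0 < N.descFactorial t := Nat.pos_of_ne_zero (fun hc => by have := Nat.descFactorial_eq_zero_iff_lt.mp hc; omega)
  have h2 : (N - t).choose (m - t) * N ^ t * N.descFactorial t
      ≤ m ^ t * N.choose m * N.descFactorial t := by
    calc (N - t).choose (m - t) * N ^ t * N.descFactorial t
        = ((N - t).choose (m - t) * N.descFactorial t) * N ^ t := by ring
      _ = N.choose m * (m.descFactorial t * N ^ t) := by rw [h1]; ring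
      _ ≤ N.choose m * (m ^ t * N.descFactorial t) :=
          Nat.mul_le_mul_left _ (aux_descF t hmN)
      _ = m ^ t * N.choose m * N.descFactorial t := by ring
  exact Nat.le_of_mul_le_mul_right h2 hpos

-- count of supersets in powersetCard
lemma aux_card_superset {ι : Type*} [DecidableEq ι] (U T : Finset ι) (m : ℕ)
    (hT : T ⊆ U) (htm : T.card ≤ m) :
    ((U.powersetCard m).filter (fun F => T ⊆ F)).card
      = (U.card - T.card).choose (m - T.card) := by
  rw [← card_sdiff_of_subset hT, ← card_powersetCard]
  apply Finset.card_bij' (fun F _ => F \ T) (fun G _ => G ∪ T)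
  · intro F hF
    simp only [mem_filter, mem_powersetCard] at hF
    obtain ⟨⟨hFU, hFc⟩, hTF⟩ := hF
    simp only [mem_powersetCard]
    exact ⟨sdiff_subset_sdiff hFU (le_refl T), by rw [card_sdiff_of_subset hTF, hFc]⟩
  · intro G hG
    simp only [mem_powersetCard] at hG
    obtain ⟨hGU, hGc⟩ := hG
    have hdisj : Disjoint G T := (subset_sdiff.mp hGU).2
    simp only [mem_filter, mem_powersetCard]
    refine ⟨⟨union_subset ((hGU.trans (sdiff_subset)) : G ⊆ U) hT, ?_⟩, subset_union_right⟩
    rw [card_union_of_disjoint hdisj, hGc]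
    omega
  · intro F hF
    simp only [mem_filter] at hF
    exact sdiff_union_of_subset hF.2
  · intro G hG
    simp only [mem_powersetCard] at hG
    have hdisj : Disjoint G T := (subset_sdiff.mp hG.1).2
    exact union_sdiff_cancel_right hdisj

lemma aux_ratio_real {ι : Type*} [DecidableEq ι] (U T : Finset ι) (m : ℕ)
    (hU : 0 < U.card) (hT : T ⊆ U) (hm : m ≤ U.card) :
    ((((U.powersetCard m).filter (fun F => T ⊆ F)).card : ℝ))
      ≤ ((m : ℝ) / U.card) ^ T.card * (U.powersetCard m).card := by
  rcases le_or_gt T.card m with htm | htm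
  · rw [aux_card_superset U T m hT htm, card_powersetCard]
    have h := aux_choose_ratio htm hm
    have hN : (0:ℝ) < (U.card : ℝ) ^ T.card := by positivity
    rw [div_pow, div_mul_eq_mul_div, le_div_iff₀ hN]
    exact_mod_cast h
  · have : ((U.powersetCard m).filter (fun F => T ⊆ F)) = ∅ := by
      apply filter_eq_empty_iff.mpr
      intro F hF hTF
      rw [mem_powersetCard] at hF
      have := card_le_card hTF
      omega
    rw [this]
    simp only [card_empty, Nat.cast_zero]
    positivity

lemma aux_tail {α β γ : Type*} [DecidableEq α] [DecidableEq β] [DecidableEq γ]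
    (Vi : Finset α) (Vj : Finset β) (Vk : Finset γ) (fik fjk t0 : ℕ)
    (hVi : 0 < Vi.card) (hVj : 0 < Vj.card) (hVk : 0 < Vk.card)
    (u : α) (hu : u ∈ Vi) (v : β) (hv : v ∈ Vj)
    (hfik : fik ≤ Vi.card * Vk.card) (hfjk : fjk ≤ Vj.card * Vk.card) :
    (((((Vi ×ˢ Vk).powersetCard fik) ×ˢ ((Vj ×ˢ Vk).powersetCard fjk)).filter
        (fun p => t0 ≤ (Vk.filter (fun c => (u, c) ∈ p.1 ∧ (v, c) ∈ p.2)).card)).card : ℝ)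
      ≤ (Vk.card : ℝ) ^ t0 / t0.factorial
          * ((fik : ℝ) / (Vi.card * Vk.card)) ^ t0
          * ((fjk : ℝ) / (Vj.card * Vk.card)) ^ t0
          * ((((Vi ×ˢ Vk).powersetCard fik).card : ℝ)
              * (((Vj ×ˢ Vk).powersetCard fjk).card : ℝ)) := by
  classical
  set B := (Vi ×ˢ Vk).powersetCard fik with hB
  set C := (Vj ×ˢ Vk).powersetCard fjk with hC
  set q : ℝ := ((fik : ℝ) / (Vi.card * Vk.card)) ^ t0 * (B.card : ℝ)
      * (((fjk : ℝ) / (Vj.card * Vk.card)) ^ t0 * (C.card : ℝ)) with hq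
  have hsub : ((B ×ˢ C).filter
        (fun p => t0 ≤ (Vk.filter (fun c => (u, c) ∈ p.1 ∧ (v, c) ∈ p.2)).card))
      ⊆ (Vk.powersetCard t0).biUnion (fun S =>
          (B.filter (fun F => S.image (fun c => (u, c)) ⊆ F)) ×ˢ
          (C.filter (fun G => S.image (fun c => (v, c)) ⊆ G))) := by
    intro p hp
    rw [mem_filter] at hp
    obtain ⟨hpBC, hcard⟩ := hp
    obtain ⟨S, hSW, hScard⟩ := Finset.exists_subset_card_eq hcard
    rw [mem_biUnion]
    refine ⟨S, ?_, ?_⟩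
    · rw [mem_powersetCard]
      exact ⟨hSW.trans (filter_subset _ _), hScard⟩
    · rw [mem_product] at hpBC ⊢
      refine ⟨mem_filter.mpr ⟨hpBC.1, ?_⟩, mem_filter.mpr ⟨hpBC.2, ?_⟩⟩
      · intro x hx
        obtain ⟨c, hc, rfl⟩ := mem_image.mp hx
        exact ((mem_filter.mp (hSW hc)).2).1
      · intro x hx
        obtain ⟨c, hc, rfl⟩ := mem_image.mp hx
        exact ((mem_filter.mp (hSW hc)).2).2
  have hbound : ∀ S ∈ Vk.powersetCard t0,
      (((B.filter (fun F => S.image (fun c => (u, c)) ⊆ F)) ×ˢ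
        (C.filter (fun G => S.image (fun c => (v, c)) ⊆ G))).card : ℝ) ≤ q := by
    intro S hS
    rw [mem_powersetCard] at hS
    obtain ⟨hSVk, hScard⟩ := hS
    have hinj1 : Function.Injective (fun c : γ => (u, c)) := by
      intro a b hab; simpa using hab
    have hinj2 : Function.Injective (fun c : γ => (v, c)) := by
      intro a b hab; simpa using hab
    have hc1 : (S.image (fun c => (u, c))).card = t0 := by
      rw [card_image_of_injective _ hinj1, hScard]
    have hc2 : (S.image (fun c => (v, c))).card = t0 := by
      rw [card_image_of_injective _ hinj2, hScard]
    have hT1 : S.image (fun c => (u, c)) ⊆ Vi ×ˢ Vk := by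
      intro x hx; obtain ⟨c, hc, rfl⟩ := mem_image.mp hx
      exact mem_product.mpr ⟨hu, hSVk hc⟩
    have hT2 : S.image (fun c => (v, c)) ⊆ Vj ×ˢ Vk := by
      intro x hx; obtain ⟨c, hc, rfl⟩ := mem_image.mp hx
      exact mem_product.mpr ⟨hv, hSVk hc⟩
    have hUc1 : (Vi ×ˢ Vk).card = Vi.card * Vk.card := card_product _ _
    have hUc2 : (Vj ×ˢ Vk).card = Vj.card * Vk.card := card_product _ _
    have h1 := aux_ratio_real (Vi ×ˢ Vk) (S.image (fun c => (u, c))) fik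
      (by rw [hUc1]; positivity) hT1 (by rw [hUc1]; exact hfik)
    have h2 := aux_ratio_real (Vj ×ˢ Vk) (S.image (fun c => (v, c))) fjk
      (by rw [hUc2]; positivity) hT2 (by rw [hUc2]; exact hfjk)
    rw [hc1, hUc1] at h1
    rw [hc2, hUc2] at h2
    rw [card_product, hq]
    push_cast
    apply mul_le_mul _ _ (by positivity) (by positivity)
    · exact_mod_cast h1
    · exact_mod_cast h2
  calc (((B ×ˢ C).filter
        (fun p => t0 ≤ (Vk.filter (fun c => (u, c) ∈ p.1 ∧ (v, c) ∈ p.2)).card)).card : ℝ)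
      ≤ (((Vk.powersetCard t0).biUnion (fun S =>
          (B.filter (fun F => S.image (fun c => (u, c)) ⊆ F)) ×ˢ
          (C.filter (fun G => S.image (fun c => (v, c)) ⊆ G)))).card : ℝ) := by
        exact_mod_cast card_le_card hsub
    _ ≤ ∑ S ∈ Vk.powersetCard t0,
          (((B.filter (fun F => S.image (fun c => (u, c)) ⊆ F)) ×ˢ
            (C.filter (fun G => S.image (fun c => (v, c)) ⊆ G))).card : ℝ) := by
        exact_mod_cast card_biUnion_le
    _ ≤ ∑ _S ∈ Vk.powersetCard t0, q := Finset.sum_le_sum hbound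
    _ = ((Vk.card.choose t0 : ℝ)) * q := by
        rw [Finset.sum_const, card_powersetCard, nsmul_eq_mul]
    _ ≤ ((Vk.card : ℝ) ^ t0 / t0.factorial) * q := by
        apply mul_le_mul_of_nonneg_right _ (by positivity)
        rw [le_div_iff₀ (by positivity)]
        have h3 : Vk.card.choose t0 * t0.factorial ≤ Vk.card ^ t0 := by
          have h5 := Nat.descFactorial_eq_factorial_mul_choose Vk.card t0
          have h4 := Nat.descFactorial_le_pow Vk.card t0
          rw [Nat.mul_comm] at h5
          omega
        exact_mod_cast h3
    _ = (Vk.card : ℝ) ^ t0 / t0.factorial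
          * ((fik : ℝ) / (Vi.card * Vk.card)) ^ t0
          * ((fjk : ℝ) / (Vj.card * Vk.card)) ^ t0
          * ((B.card : ℝ) * (C.card : ℝ)) := by rw [hq]; ring

lemma aux_symmdiff {α β γ : Type*} [DecidableEq α] [DecidableEq β] [DecidableEq γ]
    (Vi : Finset α) (Vj : Finset β) (Vk : Finset γ)
    (Fij : Finset (α × β)) (Fik : Finset (α × γ)) (Fjk : Finset (β × γ))
    (u u' : α) (v v' : β) (huu' : u ≠ u')
    (huv : (u, v) ∈ Fij) (huv' : (u', v') ∉ Fij) :
    ((tripleSet Vi Vj Vk Fij Fik Fjk) ∆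
        (tripleSet Vi Vj Vk (insert (u', v') (Fij.erase (u, v))) Fik Fjk)).card
      ≤ (Vk.filter (fun c => (u, c) ∈ Fik ∧ (v, c) ∈ Fjk)).card
        + (Vk.filter (fun c => (u', c) ∈ Fik ∧ (v', c) ∈ Fjk)).card := by
  classical
  set Fij' := insert (u', v') (Fij.erase (u, v)) with hFij'
  have hne : ((u, v) : α × β) ≠ (u', v') :=
    fun h => huu' (congrArg Prod.fst h)
  have hmem : ∀ (F : Finset (α × β)) (x : α × β × γ),
      x ∈ tripleSet Vi Vj Vk F Fik Fjk ↔
      (x.1 ∈ Vi ∧ x.2.1 ∈ Vj ∧ x.2.2 ∈ Vk) ∧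
        ((x.1, x.2.1) ∈ F ∧ (x.1, x.2.2) ∈ Fik ∧ (x.2.1, x.2.2) ∈ Fjk) := by
    intro F x
    simp [tripleSet, mem_filter, mem_product, and_assoc]
  have hsub : ((tripleSet Vi Vj Vk Fij Fik Fjk) ∆
        (tripleSet Vi Vj Vk Fij' Fik Fjk))
      ⊆ ((Vk.filter (fun c => (u, c) ∈ Fik ∧ (v, c) ∈ Fjk)).image (fun c => (u, v, c)))
        ∪ ((Vk.filter (fun c => (u', c) ∈ Fik ∧ (v', c) ∈ Fjk)).image (fun c => (u', v', c))) := by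
    intro x hx
    rw [Finset.mem_symmDiff] at hx
    by_cases h1 : (x.1, x.2.1) = ((u, v) : α × β)
    · -- x ∉ Γ', so x ∈ Γ
      have hx1 : x.1 = u := congrArg Prod.fst h1
      have hx2 : x.2.1 = v := congrArg Prod.snd h1
      have hnot : (x.1, x.2.1) ∉ Fij' := by
        rw [h1, hFij', mem_insert, mem_erase]
        simp [hne]
      have hxΓ : x ∈ tripleSet Vi Vj Vk Fij Fik Fjk := by
        rcases hx with ⟨h, _⟩ | ⟨h, _⟩
        · exact h
        · exact absurd ((hmem Fij' x).mp h).2.1 hnot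
      obtain ⟨⟨_, _, hck⟩, ⟨_, hik, hjk⟩⟩ := (hmem Fij x).mp hxΓ
      apply mem_union_left
      rw [mem_image]
      refine ⟨x.2.2, mem_filter.mpr ⟨hck, ?_, ?_⟩, ?_⟩
      · rwa [← hx1]
      · rwa [← hx2]
      · rw [← hx1, ← hx2]
    · by_cases h2 : (x.1, x.2.1) = ((u', v') : α × β)
      · have hx1 : x.1 = u' := congrArg Prod.fst h2
        have hx2 : x.2.1 = v' := congrArg Prod.snd h2
        have hnot : (x.1, x.2.1) ∉ Fij := by rw [h2]; exact huv'
        have hxΓ' : x ∈ tripleSet Vi Vj Vk Fij' Fik Fjk := by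
          rcases hx with ⟨h, _⟩ | ⟨h, _⟩
          · exact absurd ((hmem Fij x).mp h).2.1 hnot
          · exact h
        obtain ⟨⟨_, _, hck⟩, ⟨_, hik, hjk⟩⟩ := (hmem Fij' x).mp hxΓ'
        apply mem_union_right
        rw [mem_image]
        refine ⟨x.2.2, mem_filter.mpr ⟨hck, ?_, ?_⟩, ?_⟩
        · rwa [← hx1]
        · rwa [← hx2]
        · rw [← hx1, ← hx2]
      · exfalso
        have hiff : (x.1, x.2.1) ∈ Fij' ↔ (x.1, x.2.1) ∈ Fij := by
          rw [hFij', mem_insert, mem_erase]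
          simp [h1, h2]
        have : x ∈ tripleSet Vi Vj Vk Fij Fik Fjk ↔
            x ∈ tripleSet Vi Vj Vk Fij' Fik Fjk := by
          rw [hmem, hmem, hiff]
        rcases hx with ⟨ha, hb⟩ | ⟨ha, hb⟩
        · exact hb (this.mp ha)
        · exact hb (this.mpr ha)
  calc ((tripleSet Vi Vj Vk Fij Fik Fjk) ∆ (tripleSet Vi Vj Vk Fij' Fik Fjk)).card
      ≤ _ := card_le_card hsub
    _ ≤ ((Vk.filter (fun c => (u, c) ∈ Fik ∧ (v, c) ∈ Fjk)).image (fun c => (u, v, c))).card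
        + ((Vk.filter (fun c => (u', c) ∈ Fik ∧ (v', c) ∈ Fjk)).image (fun c => (u', v', c))).card :=
        card_union_le _ _
    _ ≤ _ := Nat.add_le_add (card_image_le) (card_image_le)

/-- For independent uniformly random subsets `F_ij, F_ik, F_jk` of the product
sets (with `F_ij` conditioned on containing `(u,v)` and not `(u',v')`), the triple
sets `Γ` induced by `(F_ij, F_ik, F_jk)` and `Γ'` induced by
`((F_ij \ {(u,v)}) ∪ {(u',v')}, F_ik, F_jk)` satisfy
`Pr[|Γ Δ Γ'| ≥ 22 f_ik f_jk/(r_i r_j r_k)] ≤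
  2 (2^(-11 f_ik f_jk/(r_i r_j r_k)) + exp(-f_ik/(3 r_i)))`. -/
theorem stmt_14 {α β γ : Type*} [DecidableEq α] [DecidableEq β] [DecidableEq γ]
    (Vi : Finset α) (Vj : Finset β) (Vk : Finset γ) (ri rj rk fij fik fjk : ℕ)
    (hri : Vi.card = ri) (hrj : Vj.card = rj) (hrk : Vk.card = rk)
    (hri1 : 1 ≤ ri) (hrj1 : 1 ≤ rj) (hrk1 : 1 ≤ rk)
    (hfij1 : 1 ≤ fij) (hfij2 : fij ≤ ri * rj)
    (hfik1 : 1 ≤ fik) (hfik2 : fik ≤ ri * rk)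
    (hfjk1 : 1 ≤ fjk) (hfjk2 : fjk ≤ rj * rk)
    (u u' : α) (huu' : u ≠ u') (hu : u ∈ Vi) (hu' : u' ∈ Vi)
    (v v' : β) (hv : v ∈ Vj) (hv' : v' ∈ Vj)
    (P : Finset (Finset (α × β) × Finset (α × γ) × Finset (β × γ)))
    (hP : P = (((Vi ×ˢ Vj).powersetCard fij).filter
          (fun F => (u, v) ∈ F ∧ (u', v') ∉ F)) ×ˢ
        ((Vi ×ˢ Vk).powersetCard fik) ×ˢ ((Vj ×ˢ Vk).powersetCard fjk)) :
    ((P.filter (fun FFF =>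
          22 * (fik : ℝ) * fjk / ((ri : ℝ) * rj * rk) ≤
            (((tripleSet Vi Vj Vk FFF.1 FFF.2.1 FFF.2.2) ∆
                (tripleSet Vi Vj Vk (insert (u', v') (FFF.1.erase (u, v)))
                  FFF.2.1 FFF.2.2)).card : ℝ))).card : ℝ) / (P.card : ℝ)
      ≤ 2 * ((2 : ℝ) ^ (-(11 * (fik : ℝ) * fjk / ((ri : ℝ) * rj * rk))) +
          Real.exp (-(fik : ℝ) / (3 * ri))) := by
  classical
  have hriR : (0:ℝ) < ri := by exact_mod_cast hri1
  have hrjR : (0:ℝ) < rj := by exact_mod_cast hrj1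
  have hrkR : (0:ℝ) < rk := by exact_mod_cast hrk1
  have hfikR : (0:ℝ) < fik := by exact_mod_cast hfik1
  have hfjkR : (0:ℝ) < fjk := by exact_mod_cast hfjk1
  set m11 : ℝ := 11 * (fik : ℝ) * fjk / ((ri : ℝ) * rj * rk) with hm11
  have hm11pos : 0 < m11 := by rw [hm11]; positivity
  have hRHSpos : (0:ℝ) < 2 * ((2 : ℝ) ^ (-m11) + Real.exp (-(fik : ℝ) / (3 * ri))) := by
    have h1 : (0:ℝ) < (2 : ℝ) ^ (-m11) := Real.rpow_pos_of_pos (by norm_num) _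
    have h2 : (0:ℝ) < Real.exp (-(fik : ℝ) / (3 * ri)) := Real.exp_pos _
    linarith
  set A := ((Vi ×ˢ Vj).powersetCard fij).filter (fun F => (u, v) ∈ F ∧ (u', v') ∉ F) with hA
  set B := (Vi ×ˢ Vk).powersetCard fik with hB
  set C := (Vj ×ˢ Vk).powersetCard fjk with hC
  rcases Nat.eq_zero_or_pos P.card with hP0 | hPpos
  · have hnum : (P.filter (fun FFF =>
          22 * (fik : ℝ) * fjk / ((ri : ℝ) * rj * rk) ≤
            (((tripleSet Vi Vj Vk FFF.1 FFF.2.1 FFF.2.2) ∆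
                (tripleSet Vi Vj Vk (insert (u', v') (FFF.1.erase (u, v)))
                  FFF.2.1 FFF.2.2)).card : ℝ))).card = 0 :=
      Nat.le_zero.mp (hP0 ▸ card_filter_le _ _)
    rw [hnum]
    simp only [Nat.cast_zero, zero_div]
    exact hRHSpos.le
  -- main case
  set t0 : ℕ := ⌈m11⌉₊ with ht0
  have ht0m : m11 ≤ t0 := Nat.le_ceil m11
  set W1 : Finset (α × γ) × Finset (β × γ) → Finset γ :=
    (fun p => Vk.filter (fun c => (u, c) ∈ p.1 ∧ (v, c) ∈ p.2)) with hW1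
  set W2 : Finset (α × γ) × Finset (β × γ) → Finset γ :=
    (fun p => Vk.filter (fun c => (u', c) ∈ p.1 ∧ (v', c) ∈ p.2)) with hW2
  set Dbad := (B ×ˢ C).filter (fun p => t0 ≤ (W1 p).card ∨ t0 ≤ (W2 p).card) with hDbad
  have hPcard : P.card = A.card * (B.card * C.card) := by
    rw [hP, card_product, card_product]
  -- numerator subset
  have hnumsub : (P.filter (fun FFF =>
          22 * (fik : ℝ) * fjk / ((ri : ℝ) * rj * rk) ≤
            (((tripleSet Vi Vj Vk FFF.1 FFF.2.1 FFF.2.2) ∆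
                (tripleSet Vi Vj Vk (insert (u', v') (FFF.1.erase (u, v)))
                  FFF.2.1 FFF.2.2)).card : ℝ))) ⊆ A ×ˢ Dbad := by
    intro FFF hFFF
    rw [mem_filter] at hFFF
    obtain ⟨hFP, hcond⟩ := hFFF
    rw [hP, mem_product] at hFP
    obtain ⟨hF1, hF23⟩ := hFP
    have hF1' := hF1
    rw [hA, mem_filter] at hF1'
    obtain ⟨_, huvF, huv'F⟩ := hF1'
    have hsd := aux_symmdiff Vi Vj Vk FFF.1 FFF.2.1 FFF.2.2 u u' v v' huu' huvF huv'F
    have hXY : 2 * m11 ≤ ((W1 FFF.2).card : ℝ) + ((W2 FFF.2).card : ℝ) := by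
      have h22 : 22 * (fik : ℝ) * fjk / ((ri : ℝ) * rj * rk) = 2 * m11 := by
        rw [hm11]; ring
      rw [h22] at hcond
      refine hcond.trans ?_
      have : (((tripleSet Vi Vj Vk FFF.1 FFF.2.1 FFF.2.2) ∆
          (tripleSet Vi Vj Vk (insert (u', v') (FFF.1.erase (u, v)))
            FFF.2.1 FFF.2.2)).card : ℝ) ≤ ((W1 FFF.2).card : ℝ) + ((W2 FFF.2).card : ℝ) := by
        exact_mod_cast hsd
      exact this
    have hor : t0 ≤ (W1 FFF.2).card ∨ t0 ≤ (W2 FFF.2).card := by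
      by_contra hcon
      push_neg at hcon
      obtain ⟨hc1, hc2⟩ := hcon
      have hx : ((W1 FFF.2).card : ℝ) < m11 := by
        by_contra hge
        push_neg at hge
        exact absurd hc1 (not_lt.mpr (Nat.ceil_le.mpr hge))
      have hy : ((W2 FFF.2).card : ℝ) < m11 := by
        by_contra hge
        push_neg at hge
        exact absurd hc2 (not_lt.mpr (Nat.ceil_le.mpr hge))
      linarith
    rw [mem_product]
    exact ⟨hF1, mem_filter.mpr ⟨hF23, hor⟩⟩
  -- positivity of factor cards
  have hPcard' := hPpos
  rw [hPcard] at hPcard'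
  have hApos : 0 < A.card := Nat.pos_of_ne_zero (fun h => by rw [h] at hPcard'; simp at hPcard')
  have hBCpos : 0 < B.card * C.card := Nat.pos_of_ne_zero (fun h => by rw [h] at hPcard'; simp at hPcard')
  have hnaR : (0:ℝ) < A.card := by exact_mod_cast hApos
  have hbcR : (0:ℝ) < (B.card : ℝ) * C.card := by exact_mod_cast hBCpos
  -- tail bounds
  set K : ℝ := (rk : ℝ) ^ t0 / t0.factorial * ((fik : ℝ) / (ri * rk)) ^ t0
      * ((fjk : ℝ) / (rj * rk)) ^ t0 with hK
  have hVipos : 0 < Vi.card := by omega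
  have hVjpos : 0 < Vj.card := by omega
  have hVkpos : 0 < Vk.card := by omega
  have hDb1 : (((B ×ˢ C).filter (fun p => t0 ≤ (W1 p).card)).card : ℝ)
      ≤ K * ((B.card : ℝ) * C.card) := by
    have h := aux_tail Vi Vj Vk fik fjk t0 hVipos hVjpos hVkpos u hu v hv
      (by rw [hri, hrk]; exact hfik2) (by rw [hrj, hrk]; exact hfjk2)
    rw [hri, hrj, hrk] at h
    calc (((B ×ˢ C).filter (fun p => t0 ≤ (W1 p).card)).card : ℝ)
        ≤ (rk : ℝ) ^ t0 / t0.factorial * ((fik : ℝ) / (ri * rk)) ^ t0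
            * ((fjk : ℝ) / (rj * rk)) ^ t0
            * ((((Vi ×ˢ Vk).powersetCard fik).card : ℝ)
              * (((Vj ×ˢ Vk).powersetCard fjk).card : ℝ)) := by
          push_cast at h ⊢
          exact h
      _ = K * ((B.card : ℝ) * C.card) := by rw [hK, hB, hC]
  have hDb2 : (((B ×ˢ C).filter (fun p => t0 ≤ (W2 p).card)).card : ℝ)
      ≤ K * ((B.card : ℝ) * C.card) := by
    have h := aux_tail Vi Vj Vk fik fjk t0 hVipos hVjpos hVkpos u' hu' v' hv'
      (by rw [hri, hrk]; exact hfik2) (by rw [hrj, hrk]; exact hfjk2)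
    rw [hri, hrj, hrk] at h
    calc (((B ×ˢ C).filter (fun p => t0 ≤ (W2 p).card)).card : ℝ)
        ≤ (rk : ℝ) ^ t0 / t0.factorial * ((fik : ℝ) / (ri * rk)) ^ t0
            * ((fjk : ℝ) / (rj * rk)) ^ t0
            * ((((Vi ×ˢ Vk).powersetCard fik).card : ℝ)
              * (((Vj ×ˢ Vk).powersetCard fjk).card : ℝ)) := by
          push_cast at h ⊢
          exact h
      _ = K * ((B.card : ℝ) * C.card) := by rw [hK, hB, hC]
  -- K ≤ (1/2)^t0 ≤ 2^(-m11)
  set μ : ℝ := (fik : ℝ) * fjk / ((ri : ℝ) * rj * rk) with hμ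
  have hμpos : 0 < μ := by rw [hμ]; positivity
  have hμ11 : m11 = 11 * μ := by rw [hm11, hμ]; ring
  have hKeq : K = μ ^ t0 / t0.factorial := by
    have hbase : (rk : ℝ) * ((fik : ℝ) / (ri * rk)) * ((fjk : ℝ) / (rj * rk)) = μ := by
      rw [hμ]; field_simp
    rw [hK, ← hbase, mul_pow, mul_pow]
    ring
  have hfactlb : (2 * μ) ^ t0 ≤ (t0.factorial : ℝ) := by
    calc (2 * μ) ^ t0 ≤ ((2 / 11) * (t0 : ℝ)) ^ t0 := by
          apply pow_le_pow_left₀ (by positivity)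
          have : 11 * μ ≤ (t0 : ℝ) := by rw [← hμ11]; exact ht0m
          linarith
      _ = (2 / 11 : ℝ) ^ t0 * (t0 : ℝ) ^ t0 := mul_pow _ _ _
      _ ≤ (t0.factorial : ℝ) := aux_fact_lb t0
  have hK2 : K ≤ ((1 : ℝ) / 2) ^ t0 := by
    rw [hKeq]
    calc μ ^ t0 / t0.factorial ≤ μ ^ t0 / (2 * μ) ^ t0 :=
          div_le_div_of_nonneg_left (by positivity) (by positivity) hfactlb
      _ = ((1 : ℝ) / 2) ^ t0 := by
          rw [mul_pow, div_pow]
          field_simp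
          rw [← mul_pow]; norm_num
  have hK3 : ((1 : ℝ) / 2) ^ t0 ≤ (2 : ℝ) ^ (-m11) := by
    have heq : ((1 : ℝ) / 2) ^ t0 = (2 : ℝ) ^ (-(t0 : ℝ)) := by
      rw [Real.rpow_neg (by norm_num), Real.rpow_natCast, one_div, inv_pow]
    rw [heq]
    exact Real.rpow_le_rpow_of_exponent_le one_le_two (by linarith)
  have hKfin : K ≤ (2 : ℝ) ^ (-m11) := hK2.trans hK3
  -- Dbad bound
  have hDbad : (Dbad.card : ℝ) ≤ 2 * (2 : ℝ) ^ (-m11) * ((B.card : ℝ) * C.card) := by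
    have hsplit : Dbad ⊆ ((B ×ˢ C).filter (fun p => t0 ≤ (W1 p).card))
        ∪ ((B ×ˢ C).filter (fun p => t0 ≤ (W2 p).card)) := by
      rw [hDbad, ← filter_or]
    have h1 : (Dbad.card : ℝ)
        ≤ (((B ×ˢ C).filter (fun p => t0 ≤ (W1 p).card)).card : ℝ)
          + (((B ×ˢ C).filter (fun p => t0 ≤ (W2 p).card)).card : ℝ) := by
      have := (card_le_card hsplit).trans (card_union_le _ _)
      exact_mod_cast this
    calc (Dbad.card : ℝ) ≤ _ := h1
      _ ≤ K * ((B.card : ℝ) * C.card) + K * ((B.card : ℝ) * C.card) := add_le_add hDb1 hDb2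
      _ = 2 * K * ((B.card : ℝ) * C.card) := by ring
      _ ≤ 2 * (2 : ℝ) ^ (-m11) * ((B.card : ℝ) * C.card) := by
          apply mul_le_mul_of_nonneg_right _ hbcR.le
          linarith
  -- assemble
  have hnum : ((P.filter (fun FFF =>
          22 * (fik : ℝ) * fjk / ((ri : ℝ) * rj * rk) ≤
            (((tripleSet Vi Vj Vk FFF.1 FFF.2.1 FFF.2.2) ∆
                (tripleSet Vi Vj Vk (insert (u', v') (FFF.1.erase (u, v)))
                  FFF.2.1 FFF.2.2)).card : ℝ))).card : ℝ)
      ≤ (A.card : ℝ) * Dbad.card := by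
    have := (card_le_card hnumsub)
    rw [card_product] at this
    exact_mod_cast this
  have hPR : (P.card : ℝ) = (A.card : ℝ) * ((B.card : ℝ) * C.card) := by
    rw [hPcard]; push_cast; ring
  rw [div_le_iff₀ (by rw [hPR]; exact mul_pos hnaR hbcR)]
  calc ((P.filter (fun FFF =>
          22 * (fik : ℝ) * fjk / ((ri : ℝ) * rj * rk) ≤
            (((tripleSet Vi Vj Vk FFF.1 FFF.2.1 FFF.2.2) ∆
                (tripleSet Vi Vj Vk (insert (u', v') (FFF.1.erase (u, v)))
                  FFF.2.1 FFF.2.2)).card : ℝ))).card : ℝ)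
      ≤ (A.card : ℝ) * Dbad.card := hnum
    _ ≤ (A.card : ℝ) * (2 * (2 : ℝ) ^ (-m11) * ((B.card : ℝ) * C.card)) :=
        mul_le_mul_of_nonneg_left hDbad hnaR.le
    _ ≤ (A.card : ℝ) * ((2 * ((2 : ℝ) ^ (-m11) + Real.exp (-(fik : ℝ) / (3 * ri))))
          * ((B.card : ℝ) * C.card)) := by
        apply mul_le_mul_of_nonneg_left _ hnaR.le
        apply mul_le_mul_of_nonneg_right _ hbcR.le
        have := Real.exp_pos (-(fik : ℝ) / (3 * ri))
        linarith
    _ = 2 * ((2 : ℝ) ^ (-m11) + Real.exp (-(fik : ℝ) / (3 * ri))) * (P.card : ℝ) := by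
        rw [hPR]; ring
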